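/- Lower bound on the Noether-charge drift away from equilibrium: let A ∈ ℝ^{n×n} be symmetric with positive part A₊ and negative part A₋ (so A = A₊ + A₋, A₊ ⪰ 0, −A₋ ⪰ 0, A₊A₋ = 0), and let Σ* ∈ ℝ^{n×n} be positive semidefinite with Tr[Σ* A] = 0. Then for every λ > 0: Tr[Σ* exp(2λA) A] ≥ 2λ Tr[Σ* A₊²]; and for every λ < 0: Tr[Σ* exp(2λA) A] ≤ 2λ Tr[Σ* A₋²]. -/

import Mathlib

open Matrix

section DriftAux

variable {n : ℕ}

private lemma exp_mul_of_mul_eq_zero' (X Y : Matrix (Fin n) (Fin n) ℝ) (h : X * Y = 0) :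
    NormedSpace.exp X * Y = Y := by
  letI : SeminormedRing (Matrix (Fin n) (Fin n) ℝ) := Matrix.linftyOpSemiNormedRing
  letI : NormedRing (Matrix (Fin n) (Fin n) ℝ) := Matrix.linftyOpNormedRing
  letI : NormedAlgebra ℝ (Matrix (Fin n) (Fin n) ℝ) := Matrix.linftyOpNormedAlgebra
  rw [NormedSpace.exp_eq_tsum ℝ]
  beta_reduce
  erw [← (NormedSpace.expSeries_summable' (𝕂 := ℝ) X).tsum_mul_right Y]
  rw [tsum_eq_single 0]
  · simp
  · intro b hb
    obtain ⟨k, rfl⟩ := Nat.exists_eq_succ_of_ne_zero hb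
    rw [smul_mul_assoc, pow_succ, mul_assoc, h, mul_zero, smul_zero]

private lemma exp_split_mul' (Ap An : Matrix (Fin n) (Fin n) ℝ)
    (hApAn : Ap * An = 0) (hAnAp : An * Ap = 0) (L : ℝ) :
    NormedSpace.exp (L • (Ap + An)) * (Ap + An)
      = NormedSpace.exp (L • Ap) * Ap + NormedSpace.exp (L • An) * An := by
  letI : SeminormedRing (Matrix (Fin n) (Fin n) ℝ) := Matrix.linftyOpSemiNormedRing
  letI : NormedRing (Matrix (Fin n) (Fin n) ℝ) := Matrix.linftyOpNormedRing
  letI : NormedAlgebra ℝ (Matrix (Fin n) (Fin n) ℝ) := Matrix.linftyOpNormedAlgebra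
  have hc : Commute (L • Ap) (L • An) := by
    show _ = _
    rw [smul_mul_assoc, mul_smul_comm, hApAn, smul_mul_assoc, mul_smul_comm, hAnAp]
  rw [smul_add, Matrix.exp_add_of_commute _ _ hc]
  have e1 : NormedSpace.exp (L • An) * Ap = Ap :=
    exp_mul_of_mul_eq_zero' _ _ (by rw [smul_mul_assoc, hAnAp, smul_zero])
  have e2 : NormedSpace.exp (L • Ap) * An = An :=
    exp_mul_of_mul_eq_zero' _ _ (by rw [smul_mul_assoc, hApAn, smul_zero])
  have e3 : Commute An (NormedSpace.exp (L • An)) :=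
    ((Commute.refl An).smul_right L).exp_right
  rw [mul_add]
  congr 1
  · rw [mul_assoc, e1]
  · rw [mul_assoc, ← e3.eq, ← mul_assoc, e2, e3.eq]

private lemma psd_comb' (M : Matrix (Fin n) (Fin n) ℝ) (hM : M.IsHermitian) (c a b d : ℝ)
    (h : ∀ i, 0 ≤ a * (Real.exp (c * hM.eigenvalues i) * hM.eigenvalues i)
        + b * hM.eigenvalues i + d * (hM.eigenvalues i * hM.eigenvalues i)) :
    (a • (NormedSpace.exp (c • M) * M) + b • M + d • (M * M)).PosSemidef := by
  classical
  set U : Matrix (Fin n) (Fin n) ℝ := ↑(hM.eigenvectorUnitary) with hUdef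
  set μ : Fin n → ℝ := hM.eigenvalues with hμdef
  have hU1 : U * star U = 1 := mem_unitaryGroup_iff.mp (hM.eigenvectorUnitary).2
  have hU2 : star U * U = 1 := mem_unitaryGroup_iff'.mp (hM.eigenvectorUnitary).2
  have hspec : M = U * diagonal μ * star U := by
    have h2 := hM.spectral_theorem
    rw [RCLike.ofReal_real_eq_id] at h2
    simpa using h2
  have key : ∀ v w : Fin n → ℝ, (U * diagonal v * star U) * (U * diagonal w * star U)
      = U * diagonal (fun i => v i * w i) * star U := by
    intro v w
    simp only [Matrix.mul_assoc]
    rw [← Matrix.mul_assoc (star U) U (diagonal w * star U), hU2, one_mul,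
      ← Matrix.mul_assoc (diagonal v) (diagonal w) (star U), diagonal_mul_diagonal]
  have ksmul : ∀ (t : ℝ) (v : Fin n → ℝ), t • (U * diagonal v * star U)
      = U * diagonal (fun i => t * v i) * star U := by
    intro t v
    rw [← smul_mul_assoc, ← mul_smul_comm, ← diagonal_smul]
    congr 1
  have hexp : NormedSpace.exp (c • M)
      = U * diagonal (fun i => Real.exp (c * μ i)) * star U := by
    have hcM : c • M = U * diagonal (fun i => c * μ i) * star U := by
      rw [hspec, ksmul]
    rw [hcM]
    set u : (Matrix (Fin n) (Fin n) ℝ)ˣ := ⟨U, star U, hU1, hU2⟩ with hu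
    have h3 := Matrix.exp_units_conj u (diagonal (fun i => c * μ i))
    have hcoe : (↑u⁻¹ : Matrix (Fin n) (Fin n) ℝ) = star U := rfl
    have hcoe2 : (↑u : Matrix (Fin n) (Fin n) ℝ) = U := rfl
    rw [hcoe, hcoe2] at h3
    rw [h3, Matrix.exp_diagonal]
    congr 1
    rw [Pi.exp_def]
    funext i
    rw [← Real.exp_eq_exp_ℝ]
  have hMM : M * M = U * diagonal (fun i => μ i * μ i) * star U := by
    rw [hspec, key]
  have hEM : NormedSpace.exp (c • M) * M
      = U * diagonal (fun i => Real.exp (c * μ i) * μ i) * star U := by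
    rw [hexp, hspec, key]
  have hfinal : a • (NormedSpace.exp (c • M) * M) + b • M + d • (M * M)
      = U * diagonal (fun i => a * (Real.exp (c * μ i) * μ i) + b * μ i
          + d * (μ i * μ i)) * star U := by
    rw [hEM, hMM, ksmul, ksmul]
    rw [hspec, ksmul, ← add_mul, ← add_mul, ← Matrix.mul_add, ← Matrix.mul_add,
      diagonal_add, diagonal_add]
  rw [hfinal]
  have hd : (diagonal (fun i => a * (Real.exp (c * μ i) * μ i) + b * μ i
      + d * (μ i * μ i))).PosSemidef := posSemidef_diagonal_iff.mpr h
  have h5 := hd.mul_mul_conjTranspose_same U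
  rwa [Matrix.star_eq_conjTranspose]

private lemma trace_mul_psd_nonneg' (S P : Matrix (Fin n) (Fin n) ℝ)
    (hS : S.PosSemidef) (hP : P.PosSemidef) : 0 ≤ (S * P).trace := by
  obtain ⟨B, rfl⟩ : ∃ B : Matrix (Fin n) (Fin n) ℝ, S = Bᵀ * B := by
    open scoped MatrixOrder in
    have h0 : (0 : Matrix (Fin n) (Fin n) ℝ) ≤ S := Matrix.nonneg_iff_posSemidef.mpr hS
    obtain ⟨X, hX, -, hXS⟩ := CFC.exists_sqrt_of_isSelfAdjoint_of_quasispectrumRestricts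
      hS.isHermitian (QuasispectrumRestricts.nnreal_of_nonneg h0)
    refine ⟨X, ?_⟩
    rw [← hXS, ← Matrix.conjTranspose_eq_transpose_of_trivial, ← Matrix.star_eq_conjTranspose,
      hX.star_eq]
  rw [Matrix.mul_assoc, Matrix.trace_mul_comm]
  have hpsd := hP.mul_mul_conjTranspose_same B
  rw [Matrix.trace]
  apply Finset.sum_nonneg
  intro i _
  have h0 := hpsd.dotProduct_mulVec_nonneg (Pi.single i 1)
  simpa [Matrix.mulVec_single, dotProduct, Pi.single_apply, Matrix.diag] using h0

end DriftAux

/-- Lower bound on the Noether-charge drift away from equilibrium: if `A = A₊ + A₋` is the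
decomposition of a symmetric matrix into positive and negative parts, `Σ* ⪰ 0` and
`Tr[Σ*A] = 0` (the noise-equilibrium condition), then for `λ > 0`,
`Tr[Σ* exp(2λA) A] ≥ 2λ Tr[Σ* A₊²]`, and for `λ < 0`,
`Tr[Σ* exp(2λA) A] ≤ 2λ Tr[Σ* A₋²]`. -/
theorem drift_bound_away_from_equilibrium {n : ℕ}
    (A Ap An Sstar : Matrix (Fin n) (Fin n) ℝ) (hA : A.IsSymm)
    (hsplit : A = Ap + An) (hApsymm : Ap.IsSymm) (hAnsymm : An.IsSymm)
    (hAp : Ap.PosSemidef) (hAn : (-An).PosSemidef)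
    (hApAn : Ap * An = 0) (hAnAp : An * Ap = 0)
    (hS : Sstar.PosSemidef) (heq : (Sstar * A).trace = 0) :
    (∀ l : ℝ, 0 < l →
        2 * l * (Sstar * (Ap * Ap)).trace ≤ (Sstar * NormedSpace.exp ((2 * l) • A) * A).trace)
      ∧ (∀ l : ℝ, l < 0 →
        (Sstar * NormedSpace.exp ((2 * l) • A) * A).trace ≤ 2 * l * (Sstar * (An * An)).trace) := by
  have hsplitE : ∀ L : ℝ, NormedSpace.exp (L • A) * A
      = NormedSpace.exp (L • Ap) * Ap + NormedSpace.exp (L • An) * An := by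
    intro L
    rw [hsplit]
    exact exp_split_mul' Ap An hApAn hAnAp L
  have hnegL : ∀ L : ℝ, (-L) • (-An) = L • An := by
    intro L; rw [smul_neg, neg_smul, neg_neg]
  constructor
  · intro l hl
    set L := 2 * l with hLdef
    have hLpos : 0 < L := by positivity
    have P1 := psd_comb' Ap hAp.1 L 1 (-1) (-L) (by
      intro i
      have hμ := hAp.eigenvalues_nonneg i
      have he := mul_le_mul_of_nonneg_right
        (Real.add_one_le_exp (L * hAp.1.eigenvalues i)) hμ
      nlinarith)
    have P2 := psd_comb' (-An) hAn.1 (-L) (-1) 1 0 (by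
      intro i
      have hμ := hAn.eigenvalues_nonneg i
      have he : Real.exp ((-L) * hAn.1.eigenvalues i) ≤ 1 := by
        apply Real.exp_le_one_iff.mpr
        nlinarith
      nlinarith)
    have hE : NormedSpace.exp (L • A) * A
        = ((1 : ℝ) • (NormedSpace.exp (L • Ap) * Ap) + (-1 : ℝ) • Ap + (-L) • (Ap * Ap))
        + ((-1 : ℝ) • (NormedSpace.exp ((-L) • (-An)) * (-An)) + (1 : ℝ) • (-An)
            + (0 : ℝ) • ((-An) * (-An)))
        + A + L • (Ap * Ap) := by
      rw [hsplitE L, hnegL L, hsplit]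
      simp only [one_smul, neg_smul, zero_smul, mul_neg, smul_neg, neg_neg]
      abel
    have t1 := trace_mul_psd_nonneg' Sstar _ hS P1
    have t2 := trace_mul_psd_nonneg' Sstar _ hS P2
    have tr : (Sstar * NormedSpace.exp (L • A) * A).trace
        = (Sstar * ((1 : ℝ) • (NormedSpace.exp (L • Ap) * Ap) + (-1 : ℝ) • Ap
              + (-L) • (Ap * Ap))).trace
          + (Sstar * ((-1 : ℝ) • (NormedSpace.exp ((-L) • (-An)) * (-An)) + (1 : ℝ) • (-An)
              + (0 : ℝ) • ((-An) * (-An)))).trace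
          + (Sstar * A).trace + L * (Sstar * (Ap * Ap)).trace := by
      rw [Matrix.mul_assoc, hE]
      simp only [Matrix.mul_add, trace_add, Matrix.mul_smul, trace_smul, smul_eq_mul]
    rw [tr, heq]
    linarith
  · intro l hl
    set L := 2 * l with hLdef
    have hLneg : L < 0 := by simp only [hLdef]; linarith
    have Q1 := psd_comb' Ap hAp.1 L (-1) 1 0 (by
      intro i
      have hμ := hAp.eigenvalues_nonneg i
      have he : Real.exp (L * hAp.1.eigenvalues i) ≤ 1 := by
        apply Real.exp_le_one_iff.mpr
        nlinarith
      nlinarith)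
    have Q2 := psd_comb' (-An) hAn.1 (-L) 1 (-1) L (by
      intro i
      have hμ := hAn.eigenvalues_nonneg i
      have he := mul_le_mul_of_nonneg_right
        (Real.add_one_le_exp ((-L) * hAn.1.eigenvalues i)) hμ
      nlinarith)
    have hE : NormedSpace.exp (L • A) * A
        = A + L • (An * An)
        - ((-1 : ℝ) • (NormedSpace.exp (L • Ap) * Ap) + (1 : ℝ) • Ap + (0 : ℝ) • (Ap * Ap))
        - ((1 : ℝ) • (NormedSpace.exp ((-L) • (-An)) * (-An)) + (-1 : ℝ) • (-An)
            + L • ((-An) * (-An))) := by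
      rw [hsplitE L, hnegL L, hsplit]
      simp only [one_smul, neg_smul, zero_smul, mul_neg, smul_neg, neg_neg, neg_mul, neg_mul_neg]
      abel
    have t1 := trace_mul_psd_nonneg' Sstar _ hS Q1
    have t2 := trace_mul_psd_nonneg' Sstar _ hS Q2
    have tr : (Sstar * NormedSpace.exp (L • A) * A).trace
        = (Sstar * A).trace + L * (Sstar * (An * An)).trace
          - (Sstar * ((-1 : ℝ) • (NormedSpace.exp (L • Ap) * Ap) + (1 : ℝ) • Ap
              + (0 : ℝ) • (Ap * Ap))).trace
          - (Sstar * ((1 : ℝ) • (NormedSpace.exp ((-L) • (-An)) * (-An)) + (-1 : ℝ) • (-An)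
              + L • ((-An) * (-An)))).trace := by
      rw [Matrix.mul_assoc, hE]
      simp only [Matrix.mul_add, Matrix.mul_sub, trace_add, trace_sub, Matrix.mul_smul,
        trace_smul, smul_eq_mul]
    rw [tr, heq]
    linarith
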